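/- Let k be a field of characteristic zero. Consider the quadruple of 4×4 matrices x₁ = E₁₃, x₂ = E₁₄, x₃ = E₂₃, x₄ = E₂₄, where E_{ab} denotes the matrix with a single 1 in row a, column b and zeros elsewhere. These matrices pairwise commute (indeed all pairwise products are zero), and the k-vector space of tuples (z₁, z₂, z₃, z₄) of 4×4 matrices over k satisfying xᵢ·zⱼ − zⱼ·xᵢ + zᵢ·xⱼ − xⱼ·zᵢ = 0 for all 1 ≤ i, j ≤ 4 has dimension exactly 24. (This tangent-space computation witnesses that the square-zero locus is an irreducible component of the variety of commuting quadruples of 4×4 matrices.) -/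

import Mathlib

/-- The Zariski tangent space to the scheme of commuting `n`-tuples of `d×d` matrices at
a commuting tuple `x`: the space of tuples `(z₁,…,zₙ)` with
`xᵢ·zⱼ − zⱼ·xᵢ + zᵢ·xⱼ − xⱼ·zᵢ = 0` for all `i, j`. -/
def commTangent (k : Type*) [Field k] {d n : ℕ}
    (x : Fin n → Matrix (Fin d) (Fin d) k) :
    Submodule k (Fin n → Matrix (Fin d) (Fin d) k) where
  carrier := {z | ∀ i j, x i * z j - z j * x i + z i * x j - x j * z i = 0}
  zero_mem' := by intro i j; simp
  add_mem' := by
    intro a b ha hb i j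
    have h : (x i * a j - a j * x i + a i * x j - x j * a i) +
        (x i * b j - b j * x i + b i * x j - x j * b i) = 0 := by
      rw [ha i j, hb i j, add_zero]
    calc x i * (a + b) j - (a + b) j * x i + (a + b) i * x j - x j * (a + b) i
        = (x i * a j - a j * x i + a i * x j - x j * a i) +
            (x i * b j - b j * x i + b i * x j - x j * b i) := by
          simp only [Pi.add_apply, mul_add, add_mul]; abel
      _ = 0 := h
  smul_mem' := by
    intro c z hz i j
    simp only [Pi.smul_apply, Matrix.mul_smul, Matrix.smul_mul, ← smul_sub, ← smul_add]
    rw [hz i j, smul_zero]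

/-- The commuting quadruple `x₁ = E₁₃`, `x₂ = E₁₄`, `x₃ = E₂₃`, `x₄ = E₂₄` of `4×4`
matrices (written with 0-based indices). -/
def sqZeroQuadruple (k : Type*) [Field k] : Fin 4 → Matrix (Fin 4) (Fin 4) k :=
  ![Matrix.single 0 2 1, Matrix.single 0 3 1,
    Matrix.single 1 2 1, Matrix.single 1 3 1]

section SqZeroAux

set_option maxHeartbeats 1000000

theorem mul_fin_four {α : Type*} [CommRing α] (a00 a01 a02 a03 a10 a11 a12 a13 a20 a21 a22 a23 a30 a31 a32 a33 b00 b01 b02 b03 b10 b11 b12 b13 b20 b21 b22 b23 b30 b31 b32 b33 : α) :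
    !![a00, a01, a02, a03; a10, a11, a12, a13; a20, a21, a22, a23; a30, a31, a32, a33] * !![b00, b01, b02, b03; b10, b11, b12, b13; b20, b21, b22, b23; b30, b31, b32, b33] =
    !![a00*b00 + a01*b10 + a02*b20 + a03*b30, a00*b01 + a01*b11 + a02*b21 + a03*b31, a00*b02 + a01*b12 + a02*b22 + a03*b32, a00*b03 + a01*b13 + a02*b23 + a03*b33; a10*b00 + a11*b10 + a12*b20 + a13*b30, a10*b01 + a11*b11 + a12*b21 + a13*b31, a10*b02 + a11*b12 + a12*b22 + a13*b32, a10*b03 + a11*b13 + a12*b23 + a13*b33; a20*b00 + a21*b10 + a22*b20 + a23*b30, a20*b01 + a21*b11 + a22*b21 + a23*b31, a20*b02 + a21*b12 + a22*b22 + a23*b32, a20*b03 + a21*b13 + a22*b23 + a23*b33; a30*b00 + a31*b10 + a32*b20 + a33*b30, a30*b01 + a31*b11 + a32*b21 + a33*b31, a30*b02 + a31*b12 + a32*b22 + a33*b32, a30*b03 + a31*b13 + a32*b23 + a33*b33] := by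
  ext i j
  fin_cases i <;> fin_cases j <;>
    simp [Matrix.mul_apply, Fin.sum_univ_four]

theorem add_fin_four {α : Type*} [CommRing α] (a00 a01 a02 a03 a10 a11 a12 a13 a20 a21 a22 a23 a30 a31 a32 a33 b00 b01 b02 b03 b10 b11 b12 b13 b20 b21 b22 b23 b30 b31 b32 b33 : α) :
    !![a00, a01, a02, a03; a10, a11, a12, a13; a20, a21, a22, a23; a30, a31, a32, a33] + !![b00, b01, b02, b03; b10, b11, b12, b13; b20, b21, b22, b23; b30, b31, b32, b33] = !![a00 + b00, a01 + b01, a02 + b02, a03 + b03; a10 + b10, a11 + b11, a12 + b12, a13 + b13; a20 + b20, a21 + b21, a22 + b22, a23 + b23; a30 + b30, a31 + b31, a32 + b32, a33 + b33] := by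
  ext i j
  fin_cases i <;> fin_cases j <;> rfl

theorem sub_fin_four {α : Type*} [CommRing α] (a00 a01 a02 a03 a10 a11 a12 a13 a20 a21 a22 a23 a30 a31 a32 a33 b00 b01 b02 b03 b10 b11 b12 b13 b20 b21 b22 b23 b30 b31 b32 b33 : α) :
    !![a00, a01, a02, a03; a10, a11, a12, a13; a20, a21, a22, a23; a30, a31, a32, a33] - !![b00, b01, b02, b03; b10, b11, b12, b13; b20, b21, b22, b23; b30, b31, b32, b33] = !![a00 - b00, a01 - b01, a02 - b02, a03 - b03; a10 - b10, a11 - b11, a12 - b12, a13 - b13; a20 - b20, a21 - b21, a22 - b22, a23 - b23; a30 - b30, a31 - b31, a32 - b32, a33 - b33] := by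
  ext i j
  fin_cases i <;> fin_cases j <;> rfl

theorem fin4_eq_zero {α : Type*} [CommRing α] (a00 a01 a02 a03 a10 a11 a12 a13 a20 a21 a22 a23 a30 a31 a32 a33 : α)
    (h00 : a00 = 0) (h01 : a01 = 0) (h02 : a02 = 0) (h03 : a03 = 0) (h10 : a10 = 0) (h11 : a11 = 0) (h12 : a12 = 0) (h13 : a13 = 0) (h20 : a20 = 0) (h21 : a21 = 0) (h22 : a22 = 0) (h23 : a23 = 0) (h30 : a30 = 0) (h31 : a31 = 0) (h32 : a32 = 0) (h33 : a33 = 0) :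
    !![a00, a01, a02, a03; a10, a11, a12, a13; a20, a21, a22, a23; a30, a31, a32, a33] = 0 := by
  subst_vars
  ext i j
  fin_cases i <;> fin_cases j <;> rfl

theorem fin4_ext {α : Type*} [CommRing α] (a00 a01 a02 a03 a10 a11 a12 a13 a20 a21 a22 a23 a30 a31 a32 a33 b00 b01 b02 b03 b10 b11 b12 b13 b20 b21 b22 b23 b30 b31 b32 b33 : α)
    (h00 : a00 = b00) (h01 : a01 = b01) (h02 : a02 = b02) (h03 : a03 = b03) (h10 : a10 = b10) (h11 : a11 = b11) (h12 : a12 = b12) (h13 : a13 = b13) (h20 : a20 = b20) (h21 : a21 = b21) (h22 : a22 = b22) (h23 : a23 = b23) (h30 : a30 = b30) (h31 : a31 = b31) (h32 : a32 = b32) (h33 : a33 = b33) :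
    !![a00, a01, a02, a03; a10, a11, a12, a13; a20, a21, a22, a23; a30, a31, a32, a33] = !![b00, b01, b02, b03; b10, b11, b12, b13; b20, b21, b22, b23; b30, b31, b32, b33] := by
  subst_vars; rfl

theorem eta_fin_four {α : Type*} [CommRing α] (A : Matrix (Fin 4) (Fin 4) α) :
    A = !![A 0 0, A 0 1, A 0 2, A 0 3; A 1 0, A 1 1, A 1 2, A 1 3; A 2 0, A 2 1, A 2 2, A 2 3; A 3 0, A 3 1, A 3 2, A 3 3] := by
  ext i j
  fin_cases i <;> fin_cases j <;> rfl



theorem vec4_add {α : Type*} [Add α] (a0 a1 a2 a3 b0 b1 b2 b3 : α) :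
    ![a0, a1, a2, a3] + ![b0, b1, b2, b3] = ![a0 + b0, a1 + b1, a2 + b2, a3 + b3] := by
  funext i; fin_cases i <;> rfl

theorem vec4_smul {α : Type*} [Field α] (x : α) (a0 a1 a2 a3 : Matrix (Fin 4) (Fin 4) α) :
    x • ![a0, a1, a2, a3] = ![x • a0, x • a1, x • a2, x • a3] := by
  funext i; fin_cases i <;> rfl

theorem vec4_ext {α : Type*} (a0 a1 a2 a3 b0 b1 b2 b3 : α) (h0 : a0 = b0) (h1 : a1 = b1)
    (h2 : a2 = b2) (h3 : a3 = b3) : ![a0, a1, a2, a3] = ![b0, b1, b2, b3] := by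
  subst_vars; rfl

theorem smul_fin_four {α : Type*} [Field α] (x : α)
    (a00 a01 a02 a03 a10 a11 a12 a13 a20 a21 a22 a23 a30 a31 a32 a33 : α) :
    x • !![a00, a01, a02, a03; a10, a11, a12, a13; a20, a21, a22, a23; a30, a31, a32, a33] =
    !![x * a00, x * a01, x * a02, x * a03; x * a10, x * a11, x * a12, x * a13;
       x * a20, x * a21, x * a22, x * a23; x * a30, x * a31, x * a32, x * a33] := by
  ext i j; fin_cases i <;> fin_cases j <;> rfl


/-- Parametrization of the tangent space at the square-zero quadruple. -/
def sqZeroTangentParam (k : Type*) [Field k] :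
    (Fin 24 → k) →ₗ[k] (Fin 4 → Matrix (Fin 4) (Fin 4) k) where
  toFun p := ![
    !![p 4 + p 12, -p 22, p 0, p 1;
      0, p 4, p 2, p 3;
      0, 0, p 4 - p 12, 0;
      0, 0, -p 18, p 4],
    !![p 9 + 2 * p 18, p 21 - p 23, p 5, p 6;
      0, p 9 + p 18, p 7, p 8;
      0, 0, p 9 + p 18, -p 12;
      0, 0, 0, p 9],
    !![p 15, 0, p 10, p 11;
      p 12, p 15 - p 22, p 13, p 14;
      0, 0, p 15 + p 22, 0;
      0, 0, -p 21 + p 23, p 15],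
    !![p 21, 0, p 16, p 17;
      p 18, 2 * p 21 - p 23, p 19, p 20;
      0, 0, p 21, p 22;
      0, 0, 0, p 23]]
  map_add' p q := by
    simp only [Pi.add_apply]
    rw [vec4_add, add_fin_four, add_fin_four, add_fin_four, add_fin_four]
    apply vec4_ext <;> apply fin4_ext <;> ring
  map_smul' x p := by
    simp only [Pi.smul_apply, smul_eq_mul, RingHom.id_apply]
    rw [vec4_smul, smul_fin_four, smul_fin_four, smul_fin_four, smul_fin_four]
    apply vec4_ext <;> apply fin4_ext <;> ring


theorem sqZeroTangentParam_mem (k : Type*) [Field k] (p : Fin 24 → k) :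
    sqZeroTangentParam k p ∈ commTangent k (sqZeroQuadruple k) := by
  have x0 : sqZeroQuadruple k 0 = !![0, 0, 1, 0; 0, 0, 0, 0; 0, 0, 0, 0; 0, 0, 0, 0] := by
    ext i j; fin_cases i <;> fin_cases j <;> rfl
  have x1 : sqZeroQuadruple k 1 = !![0, 0, 0, 1; 0, 0, 0, 0; 0, 0, 0, 0; 0, 0, 0, 0] := by
    ext i j; fin_cases i <;> fin_cases j <;> rfl
  have x2 : sqZeroQuadruple k 2 = !![0, 0, 0, 0; 0, 0, 1, 0; 0, 0, 0, 0; 0, 0, 0, 0] := by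
    ext i j; fin_cases i <;> fin_cases j <;> rfl
  have x3 : sqZeroQuadruple k 3 = !![0, 0, 0, 0; 0, 0, 0, 1; 0, 0, 0, 0; 0, 0, 0, 0] := by
    ext i j; fin_cases i <;> fin_cases j <;> rfl
  have m0 : sqZeroTangentParam k p 0 = !![p 4 + p 12, -p 22, p 0, p 1;
      0, p 4, p 2, p 3;
      0, 0, p 4 - p 12, 0;
      0, 0, -p 18, p 4] := rfl
  have m1 : sqZeroTangentParam k p 1 = !![p 9 + 2 * p 18, p 21 - p 23, p 5, p 6;
      0, p 9 + p 18, p 7, p 8;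
      0, 0, p 9 + p 18, -p 12;
      0, 0, 0, p 9] := rfl
  have m2 : sqZeroTangentParam k p 2 = !![p 15, 0, p 10, p 11;
      p 12, p 15 - p 22, p 13, p 14;
      0, 0, p 15 + p 22, 0;
      0, 0, -p 21 + p 23, p 15] := rfl
  have m3 : sqZeroTangentParam k p 3 = !![p 21, 0, p 16, p 17;
      p 18, 2 * p 21 - p 23, p 19, p 20;
      0, 0, p 21, p 22;
      0, 0, 0, p 23] := rfl
  intro i j
  fin_cases i <;> fin_cases j
  · show sqZeroQuadruple k 0 * sqZeroTangentParam k p 0 - sqZeroTangentParam k p 0 * sqZeroQuadruple k 0 + sqZeroTangentParam k p 0 * sqZeroQuadruple k 0 - sqZeroQuadruple k 0 * sqZeroTangentParam k p 0 = 0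
    abel
  · show sqZeroQuadruple k 0 * sqZeroTangentParam k p 1 - sqZeroTangentParam k p 1 * sqZeroQuadruple k 0 + sqZeroTangentParam k p 0 * sqZeroQuadruple k 1 - sqZeroQuadruple k 1 * sqZeroTangentParam k p 0 = 0
    rw [x0, x1, m0, m1]
    simp only [mul_fin_four]
    rw [sub_fin_four, add_fin_four, sub_fin_four]
    apply fin4_eq_zero <;> ring
  · show sqZeroQuadruple k 0 * sqZeroTangentParam k p 2 - sqZeroTangentParam k p 2 * sqZeroQuadruple k 0 + sqZeroTangentParam k p 0 * sqZeroQuadruple k 2 - sqZeroQuadruple k 2 * sqZeroTangentParam k p 0 = 0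
    rw [x0, x2, m0, m2]
    simp only [mul_fin_four]
    rw [sub_fin_four, add_fin_four, sub_fin_four]
    apply fin4_eq_zero <;> ring
  · show sqZeroQuadruple k 0 * sqZeroTangentParam k p 3 - sqZeroTangentParam k p 3 * sqZeroQuadruple k 0 + sqZeroTangentParam k p 0 * sqZeroQuadruple k 3 - sqZeroQuadruple k 3 * sqZeroTangentParam k p 0 = 0
    rw [x0, x3, m0, m3]
    simp only [mul_fin_four]
    rw [sub_fin_four, add_fin_four, sub_fin_four]
    apply fin4_eq_zero <;> ring
  · show sqZeroQuadruple k 1 * sqZeroTangentParam k p 0 - sqZeroTangentParam k p 0 * sqZeroQuadruple k 1 + sqZeroTangentParam k p 1 * sqZeroQuadruple k 0 - sqZeroQuadruple k 0 * sqZeroTangentParam k p 1 = 0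
    rw [x1, x0, m1, m0]
    simp only [mul_fin_four]
    rw [sub_fin_four, add_fin_four, sub_fin_four]
    apply fin4_eq_zero <;> ring
  · show sqZeroQuadruple k 1 * sqZeroTangentParam k p 1 - sqZeroTangentParam k p 1 * sqZeroQuadruple k 1 + sqZeroTangentParam k p 1 * sqZeroQuadruple k 1 - sqZeroQuadruple k 1 * sqZeroTangentParam k p 1 = 0
    abel
  · show sqZeroQuadruple k 1 * sqZeroTangentParam k p 2 - sqZeroTangentParam k p 2 * sqZeroQuadruple k 1 + sqZeroTangentParam k p 1 * sqZeroQuadruple k 2 - sqZeroQuadruple k 2 * sqZeroTangentParam k p 1 = 0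
    rw [x1, x2, m1, m2]
    simp only [mul_fin_four]
    rw [sub_fin_four, add_fin_four, sub_fin_four]
    apply fin4_eq_zero <;> ring
  · show sqZeroQuadruple k 1 * sqZeroTangentParam k p 3 - sqZeroTangentParam k p 3 * sqZeroQuadruple k 1 + sqZeroTangentParam k p 1 * sqZeroQuadruple k 3 - sqZeroQuadruple k 3 * sqZeroTangentParam k p 1 = 0
    rw [x1, x3, m1, m3]
    simp only [mul_fin_four]
    rw [sub_fin_four, add_fin_four, sub_fin_four]
    apply fin4_eq_zero <;> ring
  · show sqZeroQuadruple k 2 * sqZeroTangentParam k p 0 - sqZeroTangentParam k p 0 * sqZeroQuadruple k 2 + sqZeroTangentParam k p 2 * sqZeroQuadruple k 0 - sqZeroQuadruple k 0 * sqZeroTangentParam k p 2 = 0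
    rw [x2, x0, m2, m0]
    simp only [mul_fin_four]
    rw [sub_fin_four, add_fin_four, sub_fin_four]
    apply fin4_eq_zero <;> ring
  · show sqZeroQuadruple k 2 * sqZeroTangentParam k p 1 - sqZeroTangentParam k p 1 * sqZeroQuadruple k 2 + sqZeroTangentParam k p 2 * sqZeroQuadruple k 1 - sqZeroQuadruple k 1 * sqZeroTangentParam k p 2 = 0
    rw [x2, x1, m2, m1]
    simp only [mul_fin_four]
    rw [sub_fin_four, add_fin_four, sub_fin_four]
    apply fin4_eq_zero <;> ring
  · show sqZeroQuadruple k 2 * sqZeroTangentParam k p 2 - sqZeroTangentParam k p 2 * sqZeroQuadruple k 2 + sqZeroTangentParam k p 2 * sqZeroQuadruple k 2 - sqZeroQuadruple k 2 * sqZeroTangentParam k p 2 = 0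
    abel
  · show sqZeroQuadruple k 2 * sqZeroTangentParam k p 3 - sqZeroTangentParam k p 3 * sqZeroQuadruple k 2 + sqZeroTangentParam k p 2 * sqZeroQuadruple k 3 - sqZeroQuadruple k 3 * sqZeroTangentParam k p 2 = 0
    rw [x2, x3, m2, m3]
    simp only [mul_fin_four]
    rw [sub_fin_four, add_fin_four, sub_fin_four]
    apply fin4_eq_zero <;> ring
  · show sqZeroQuadruple k 3 * sqZeroTangentParam k p 0 - sqZeroTangentParam k p 0 * sqZeroQuadruple k 3 + sqZeroTangentParam k p 3 * sqZeroQuadruple k 0 - sqZeroQuadruple k 0 * sqZeroTangentParam k p 3 = 0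
    rw [x3, x0, m3, m0]
    simp only [mul_fin_four]
    rw [sub_fin_four, add_fin_four, sub_fin_four]
    apply fin4_eq_zero <;> ring
  · show sqZeroQuadruple k 3 * sqZeroTangentParam k p 1 - sqZeroTangentParam k p 1 * sqZeroQuadruple k 3 + sqZeroTangentParam k p 3 * sqZeroQuadruple k 1 - sqZeroQuadruple k 1 * sqZeroTangentParam k p 3 = 0
    rw [x3, x1, m3, m1]
    simp only [mul_fin_four]
    rw [sub_fin_four, add_fin_four, sub_fin_four]
    apply fin4_eq_zero <;> ring
  · show sqZeroQuadruple k 3 * sqZeroTangentParam k p 2 - sqZeroTangentParam k p 2 * sqZeroQuadruple k 3 + sqZeroTangentParam k p 3 * sqZeroQuadruple k 2 - sqZeroQuadruple k 2 * sqZeroTangentParam k p 3 = 0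
    rw [x3, x2, m3, m2]
    simp only [mul_fin_four]
    rw [sub_fin_four, add_fin_four, sub_fin_four]
    apply fin4_eq_zero <;> ring
  · show sqZeroQuadruple k 3 * sqZeroTangentParam k p 3 - sqZeroTangentParam k p 3 * sqZeroQuadruple k 3 + sqZeroTangentParam k p 3 * sqZeroQuadruple k 3 - sqZeroQuadruple k 3 * sqZeroTangentParam k p 3 = 0
    abel

theorem sqZeroTangentParam_inj (k : Type*) [Field k] :
    Function.Injective (sqZeroTangentParam k) := by
  have key : ∀ p : Fin 24 → k,
      (![sqZeroTangentParam k p 0 0 2, sqZeroTangentParam k p 0 0 3, sqZeroTangentParam k p 0 1 2, sqZeroTangentParam k p 0 1 3, sqZeroTangentParam k p 0 3 3, sqZeroTangentParam k p 1 0 2, sqZeroTangentParam k p 1 0 3, sqZeroTangentParam k p 1 1 2, sqZeroTangentParam k p 1 1 3, sqZeroTangentParam k p 1 3 3, sqZeroTangentParam k p 2 0 2, sqZeroTangentParam k p 2 0 3, sqZeroTangentParam k p 2 1 0, sqZeroTangentParam k p 2 1 2, sqZeroTangentParam k p 2 1 3, sqZeroTangentParam k p 2 3 3, sqZeroTangentParam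 k p 3 0 2, sqZeroTangentParam k p 3 0 3, sqZeroTangentParam k p 3 1 0, sqZeroTangentParam k p 3 1 2, sqZeroTangentParam k p 3 1 3, sqZeroTangentParam k p 3 2 2, sqZeroTangentParam k p 3 2 3, sqZeroTangentParam k p 3 3 3] : Fin 24 → k) = p := by
    intro p; funext a; fin_cases a <;> rfl
  intro p q h
  rw [← key p, ← key q, h]


theorem commTangent_le_range (k : Type*) [Field k] :
    commTangent k (sqZeroQuadruple k) ≤ LinearMap.range (sqZeroTangentParam k) := by
  intro z hz
  have hz' : ∀ i j, sqZeroQuadruple k i * z j - z j * sqZeroQuadruple k i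
      + z i * sqZeroQuadruple k j - sqZeroQuadruple k j * z i = 0 := hz
  have H : ∀ (i j r c : Fin 4), (sqZeroQuadruple k i * z j - z j * sqZeroQuadruple k i
      + z i * sqZeroQuadruple k j - sqZeroQuadruple k j * z i) r c = 0 := by
    intro i j r c; rw [hz' i j]; rfl
  have x0 : sqZeroQuadruple k 0 = !![0, 0, 1, 0; 0, 0, 0, 0; 0, 0, 0, 0; 0, 0, 0, 0] := by
    ext i j; fin_cases i <;> fin_cases j <;> rfl
  have x1 : sqZeroQuadruple k 1 = !![0, 0, 0, 1; 0, 0, 0, 0; 0, 0, 0, 0; 0, 0, 0, 0] := by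
    ext i j; fin_cases i <;> fin_cases j <;> rfl
  have x2 : sqZeroQuadruple k 2 = !![0, 0, 0, 0; 0, 0, 1, 0; 0, 0, 0, 0; 0, 0, 0, 0] := by
    ext i j; fin_cases i <;> fin_cases j <;> rfl
  have x3 : sqZeroQuadruple k 3 = !![0, 0, 0, 0; 0, 0, 0, 1; 0, 0, 0, 0; 0, 0, 0, 0] := by
    ext i j; fin_cases i <;> fin_cases j <;> rfl
  have e0 := H 0 1 0 0
  rw [x0, x1] at e0
  simp only [Matrix.sub_apply, Matrix.add_apply, Matrix.mul_apply, Fin.sum_univ_four,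
      Matrix.cons_val', Matrix.cons_val_zero, Matrix.cons_val_one, Matrix.head_cons,
      Matrix.cons_val_two, Matrix.cons_val_three, Matrix.tail_cons, Matrix.empty_val',
      Matrix.cons_val_fin_one, Matrix.head_fin_const, Matrix.of_apply, one_mul, mul_one,
      zero_mul, mul_zero, add_zero, zero_add, sub_zero, zero_sub] at e0
  have e1 := H 0 1 0 1
  rw [x0, x1] at e1
  simp only [Matrix.sub_apply, Matrix.add_apply, Matrix.mul_apply, Fin.sum_univ_four,
      Matrix.cons_val', Matrix.cons_val_zero, Matrix.cons_val_one, Matrix.head_cons,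
      Matrix.cons_val_two, Matrix.cons_val_three, Matrix.tail_cons, Matrix.empty_val',
      Matrix.cons_val_fin_one, Matrix.head_fin_const, Matrix.of_apply, one_mul, mul_one,
      zero_mul, mul_zero, add_zero, zero_add, sub_zero, zero_sub] at e1
  have e2 := H 0 1 0 2
  rw [x0, x1] at e2
  simp only [Matrix.sub_apply, Matrix.add_apply, Matrix.mul_apply, Fin.sum_univ_four,
      Matrix.cons_val', Matrix.cons_val_zero, Matrix.cons_val_one, Matrix.head_cons,
      Matrix.cons_val_two, Matrix.cons_val_three, Matrix.tail_cons, Matrix.empty_val',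
      Matrix.cons_val_fin_one, Matrix.head_fin_const, Matrix.of_apply, one_mul, mul_one,
      zero_mul, mul_zero, add_zero, zero_add, sub_zero, zero_sub] at e2
  have e3 := H 0 1 0 3
  rw [x0, x1] at e3
  simp only [Matrix.sub_apply, Matrix.add_apply, Matrix.mul_apply, Fin.sum_univ_four,
      Matrix.cons_val', Matrix.cons_val_zero, Matrix.cons_val_one, Matrix.head_cons,
      Matrix.cons_val_two, Matrix.cons_val_three, Matrix.tail_cons, Matrix.empty_val',
      Matrix.cons_val_fin_one, Matrix.head_fin_const, Matrix.of_apply, one_mul, mul_one,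
      zero_mul, mul_zero, add_zero, zero_add, sub_zero, zero_sub] at e3
  have e4 := H 0 1 1 2
  rw [x0, x1] at e4
  simp only [Matrix.sub_apply, Matrix.add_apply, Matrix.mul_apply, Fin.sum_univ_four,
      Matrix.cons_val', Matrix.cons_val_zero, Matrix.cons_val_one, Matrix.head_cons,
      Matrix.cons_val_two, Matrix.cons_val_three, Matrix.tail_cons, Matrix.empty_val',
      Matrix.cons_val_fin_one, Matrix.head_fin_const, Matrix.of_apply, one_mul, mul_one,
      zero_mul, mul_zero, add_zero, zero_add, sub_zero, zero_sub] at e4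
  have e5 := H 0 1 1 3
  rw [x0, x1] at e5
  simp only [Matrix.sub_apply, Matrix.add_apply, Matrix.mul_apply, Fin.sum_univ_four,
      Matrix.cons_val', Matrix.cons_val_zero, Matrix.cons_val_one, Matrix.head_cons,
      Matrix.cons_val_two, Matrix.cons_val_three, Matrix.tail_cons, Matrix.empty_val',
      Matrix.cons_val_fin_one, Matrix.head_fin_const, Matrix.of_apply, one_mul, mul_one,
      zero_mul, mul_zero, add_zero, zero_add, sub_zero, zero_sub] at e5
  have e6 := H 0 1 2 3
  rw [x0, x1] at e6
  simp only [Matrix.sub_apply, Matrix.add_apply, Matrix.mul_apply, Fin.sum_univ_four,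
      Matrix.cons_val', Matrix.cons_val_zero, Matrix.cons_val_one, Matrix.head_cons,
      Matrix.cons_val_two, Matrix.cons_val_three, Matrix.tail_cons, Matrix.empty_val',
      Matrix.cons_val_fin_one, Matrix.head_fin_const, Matrix.of_apply, one_mul, mul_one,
      zero_mul, mul_zero, add_zero, zero_add, sub_zero, zero_sub] at e6
  have e7 := H 0 1 3 2
  rw [x0, x1] at e7
  simp only [Matrix.sub_apply, Matrix.add_apply, Matrix.mul_apply, Fin.sum_univ_four,
      Matrix.cons_val', Matrix.cons_val_zero, Matrix.cons_val_one, Matrix.head_cons,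
      Matrix.cons_val_two, Matrix.cons_val_three, Matrix.tail_cons, Matrix.empty_val',
      Matrix.cons_val_fin_one, Matrix.head_fin_const, Matrix.of_apply, one_mul, mul_one,
      zero_mul, mul_zero, add_zero, zero_add, sub_zero, zero_sub] at e7
  have e8 := H 0 1 3 3
  rw [x0, x1] at e8
  simp only [Matrix.sub_apply, Matrix.add_apply, Matrix.mul_apply, Fin.sum_univ_four,
      Matrix.cons_val', Matrix.cons_val_zero, Matrix.cons_val_one, Matrix.head_cons,
      Matrix.cons_val_two, Matrix.cons_val_three, Matrix.tail_cons, Matrix.empty_val',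
      Matrix.cons_val_fin_one, Matrix.head_fin_const, Matrix.of_apply, one_mul, mul_one,
      zero_mul, mul_zero, add_zero, zero_add, sub_zero, zero_sub] at e8
  have e9 := H 0 2 0 0
  rw [x0, x2] at e9
  simp only [Matrix.sub_apply, Matrix.add_apply, Matrix.mul_apply, Fin.sum_univ_four,
      Matrix.cons_val', Matrix.cons_val_zero, Matrix.cons_val_one, Matrix.head_cons,
      Matrix.cons_val_two, Matrix.cons_val_three, Matrix.tail_cons, Matrix.empty_val',
      Matrix.cons_val_fin_one, Matrix.head_fin_const, Matrix.of_apply, one_mul, mul_one,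
      zero_mul, mul_zero, add_zero, zero_add, sub_zero, zero_sub] at e9
  have e10 := H 0 2 0 1
  rw [x0, x2] at e10
  simp only [Matrix.sub_apply, Matrix.add_apply, Matrix.mul_apply, Fin.sum_univ_four,
      Matrix.cons_val', Matrix.cons_val_zero, Matrix.cons_val_one, Matrix.head_cons,
      Matrix.cons_val_two, Matrix.cons_val_three, Matrix.tail_cons, Matrix.empty_val',
      Matrix.cons_val_fin_one, Matrix.head_fin_const, Matrix.of_apply, one_mul, mul_one,
      zero_mul, mul_zero, add_zero, zero_add, sub_zero, zero_sub] at e10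
  have e11 := H 0 2 0 2
  rw [x0, x2] at e11
  simp only [Matrix.sub_apply, Matrix.add_apply, Matrix.mul_apply, Fin.sum_univ_four,
      Matrix.cons_val', Matrix.cons_val_zero, Matrix.cons_val_one, Matrix.head_cons,
      Matrix.cons_val_two, Matrix.cons_val_three, Matrix.tail_cons, Matrix.empty_val',
      Matrix.cons_val_fin_one, Matrix.head_fin_const, Matrix.of_apply, one_mul, mul_one,
      zero_mul, mul_zero, add_zero, zero_add, sub_zero, zero_sub] at e11
  have e12 := H 0 2 0 3
  rw [x0, x2] at e12
  simp only [Matrix.sub_apply, Matrix.add_apply, Matrix.mul_apply, Fin.sum_univ_four,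
      Matrix.cons_val', Matrix.cons_val_zero, Matrix.cons_val_one, Matrix.head_cons,
      Matrix.cons_val_two, Matrix.cons_val_three, Matrix.tail_cons, Matrix.empty_val',
      Matrix.cons_val_fin_one, Matrix.head_fin_const, Matrix.of_apply, one_mul, mul_one,
      zero_mul, mul_zero, add_zero, zero_add, sub_zero, zero_sub] at e12
  have e13 := H 0 2 1 1
  rw [x0, x2] at e13
  simp only [Matrix.sub_apply, Matrix.add_apply, Matrix.mul_apply, Fin.sum_univ_four,
      Matrix.cons_val', Matrix.cons_val_zero, Matrix.cons_val_one, Matrix.head_cons,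
      Matrix.cons_val_two, Matrix.cons_val_three, Matrix.tail_cons, Matrix.empty_val',
      Matrix.cons_val_fin_one, Matrix.head_fin_const, Matrix.of_apply, one_mul, mul_one,
      zero_mul, mul_zero, add_zero, zero_add, sub_zero, zero_sub] at e13
  have e14 := H 0 2 1 2
  rw [x0, x2] at e14
  simp only [Matrix.sub_apply, Matrix.add_apply, Matrix.mul_apply, Fin.sum_univ_four,
      Matrix.cons_val', Matrix.cons_val_zero, Matrix.cons_val_one, Matrix.head_cons,
      Matrix.cons_val_two, Matrix.cons_val_three, Matrix.tail_cons, Matrix.empty_val',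
      Matrix.cons_val_fin_one, Matrix.head_fin_const, Matrix.of_apply, one_mul, mul_one,
      zero_mul, mul_zero, add_zero, zero_add, sub_zero, zero_sub] at e14
  have e15 := H 0 2 1 3
  rw [x0, x2] at e15
  simp only [Matrix.sub_apply, Matrix.add_apply, Matrix.mul_apply, Fin.sum_univ_four,
      Matrix.cons_val', Matrix.cons_val_zero, Matrix.cons_val_one, Matrix.head_cons,
      Matrix.cons_val_two, Matrix.cons_val_three, Matrix.tail_cons, Matrix.empty_val',
      Matrix.cons_val_fin_one, Matrix.head_fin_const, Matrix.of_apply, one_mul, mul_one,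
      zero_mul, mul_zero, add_zero, zero_add, sub_zero, zero_sub] at e15
  have e16 := H 0 2 3 2
  rw [x0, x2] at e16
  simp only [Matrix.sub_apply, Matrix.add_apply, Matrix.mul_apply, Fin.sum_univ_four,
      Matrix.cons_val', Matrix.cons_val_zero, Matrix.cons_val_one, Matrix.head_cons,
      Matrix.cons_val_two, Matrix.cons_val_three, Matrix.tail_cons, Matrix.empty_val',
      Matrix.cons_val_fin_one, Matrix.head_fin_const, Matrix.of_apply, one_mul, mul_one,
      zero_mul, mul_zero, add_zero, zero_add, sub_zero, zero_sub] at e16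
  have e17 := H 0 3 0 0
  rw [x0, x3] at e17
  simp only [Matrix.sub_apply, Matrix.add_apply, Matrix.mul_apply, Fin.sum_univ_four,
      Matrix.cons_val', Matrix.cons_val_zero, Matrix.cons_val_one, Matrix.head_cons,
      Matrix.cons_val_two, Matrix.cons_val_three, Matrix.tail_cons, Matrix.empty_val',
      Matrix.cons_val_fin_one, Matrix.head_fin_const, Matrix.of_apply, one_mul, mul_one,
      zero_mul, mul_zero, add_zero, zero_add, sub_zero, zero_sub] at e17
  have e18 := H 0 3 0 1
  rw [x0, x3] at e18
  simp only [Matrix.sub_apply, Matrix.add_apply, Matrix.mul_apply, Fin.sum_univ_four,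
      Matrix.cons_val', Matrix.cons_val_zero, Matrix.cons_val_one, Matrix.head_cons,
      Matrix.cons_val_two, Matrix.cons_val_three, Matrix.tail_cons, Matrix.empty_val',
      Matrix.cons_val_fin_one, Matrix.head_fin_const, Matrix.of_apply, one_mul, mul_one,
      zero_mul, mul_zero, add_zero, zero_add, sub_zero, zero_sub] at e18
  have e19 := H 0 3 0 2
  rw [x0, x3] at e19
  simp only [Matrix.sub_apply, Matrix.add_apply, Matrix.mul_apply, Fin.sum_univ_four,
      Matrix.cons_val', Matrix.cons_val_zero, Matrix.cons_val_one, Matrix.head_cons,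
      Matrix.cons_val_two, Matrix.cons_val_three, Matrix.tail_cons, Matrix.empty_val',
      Matrix.cons_val_fin_one, Matrix.head_fin_const, Matrix.of_apply, one_mul, mul_one,
      zero_mul, mul_zero, add_zero, zero_add, sub_zero, zero_sub] at e19
  have e20 := H 0 3 0 3
  rw [x0, x3] at e20
  simp only [Matrix.sub_apply, Matrix.add_apply, Matrix.mul_apply, Fin.sum_univ_four,
      Matrix.cons_val', Matrix.cons_val_zero, Matrix.cons_val_one, Matrix.head_cons,
      Matrix.cons_val_two, Matrix.cons_val_three, Matrix.tail_cons, Matrix.empty_val',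
      Matrix.cons_val_fin_one, Matrix.head_fin_const, Matrix.of_apply, one_mul, mul_one,
      zero_mul, mul_zero, add_zero, zero_add, sub_zero, zero_sub] at e20
  have e21 := H 0 3 1 2
  rw [x0, x3] at e21
  simp only [Matrix.sub_apply, Matrix.add_apply, Matrix.mul_apply, Fin.sum_univ_four,
      Matrix.cons_val', Matrix.cons_val_zero, Matrix.cons_val_one, Matrix.head_cons,
      Matrix.cons_val_two, Matrix.cons_val_three, Matrix.tail_cons, Matrix.empty_val',
      Matrix.cons_val_fin_one, Matrix.head_fin_const, Matrix.of_apply, one_mul, mul_one,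
      zero_mul, mul_zero, add_zero, zero_add, sub_zero, zero_sub] at e21
  have e22 := H 0 3 1 3
  rw [x0, x3] at e22
  simp only [Matrix.sub_apply, Matrix.add_apply, Matrix.mul_apply, Fin.sum_univ_four,
      Matrix.cons_val', Matrix.cons_val_zero, Matrix.cons_val_one, Matrix.head_cons,
      Matrix.cons_val_two, Matrix.cons_val_three, Matrix.tail_cons, Matrix.empty_val',
      Matrix.cons_val_fin_one, Matrix.head_fin_const, Matrix.of_apply, one_mul, mul_one,
      zero_mul, mul_zero, add_zero, zero_add, sub_zero, zero_sub] at e22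
  have e23 := H 0 3 3 3
  rw [x0, x3] at e23
  simp only [Matrix.sub_apply, Matrix.add_apply, Matrix.mul_apply, Fin.sum_univ_four,
      Matrix.cons_val', Matrix.cons_val_zero, Matrix.cons_val_one, Matrix.head_cons,
      Matrix.cons_val_two, Matrix.cons_val_three, Matrix.tail_cons, Matrix.empty_val',
      Matrix.cons_val_fin_one, Matrix.head_fin_const, Matrix.of_apply, one_mul, mul_one,
      zero_mul, mul_zero, add_zero, zero_add, sub_zero, zero_sub] at e23
  have e24 := H 1 2 0 1
  rw [x1, x2] at e24
  simp only [Matrix.sub_apply, Matrix.add_apply, Matrix.mul_apply, Fin.sum_univ_four,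
      Matrix.cons_val', Matrix.cons_val_zero, Matrix.cons_val_one, Matrix.head_cons,
      Matrix.cons_val_two, Matrix.cons_val_three, Matrix.tail_cons, Matrix.empty_val',
      Matrix.cons_val_fin_one, Matrix.head_fin_const, Matrix.of_apply, one_mul, mul_one,
      zero_mul, mul_zero, add_zero, zero_add, sub_zero, zero_sub] at e24
  have e25 := H 1 2 0 2
  rw [x1, x2] at e25
  simp only [Matrix.sub_apply, Matrix.add_apply, Matrix.mul_apply, Fin.sum_univ_four,
      Matrix.cons_val', Matrix.cons_val_zero, Matrix.cons_val_one, Matrix.head_cons,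
      Matrix.cons_val_two, Matrix.cons_val_three, Matrix.tail_cons, Matrix.empty_val',
      Matrix.cons_val_fin_one, Matrix.head_fin_const, Matrix.of_apply, one_mul, mul_one,
      zero_mul, mul_zero, add_zero, zero_add, sub_zero, zero_sub] at e25
  have e26 := H 1 2 0 3
  rw [x1, x2] at e26
  simp only [Matrix.sub_apply, Matrix.add_apply, Matrix.mul_apply, Fin.sum_univ_four,
      Matrix.cons_val', Matrix.cons_val_zero, Matrix.cons_val_one, Matrix.head_cons,
      Matrix.cons_val_two, Matrix.cons_val_three, Matrix.tail_cons, Matrix.empty_val',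
      Matrix.cons_val_fin_one, Matrix.head_fin_const, Matrix.of_apply, one_mul, mul_one,
      zero_mul, mul_zero, add_zero, zero_add, sub_zero, zero_sub] at e26
  have e27 := H 1 2 1 2
  rw [x1, x2] at e27
  simp only [Matrix.sub_apply, Matrix.add_apply, Matrix.mul_apply, Fin.sum_univ_four,
      Matrix.cons_val', Matrix.cons_val_zero, Matrix.cons_val_one, Matrix.head_cons,
      Matrix.cons_val_two, Matrix.cons_val_three, Matrix.tail_cons, Matrix.empty_val',
      Matrix.cons_val_fin_one, Matrix.head_fin_const, Matrix.of_apply, one_mul, mul_one,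
      zero_mul, mul_zero, add_zero, zero_add, sub_zero, zero_sub] at e27
  have e28 := H 1 2 1 3
  rw [x1, x2] at e28
  simp only [Matrix.sub_apply, Matrix.add_apply, Matrix.mul_apply, Fin.sum_univ_four,
      Matrix.cons_val', Matrix.cons_val_zero, Matrix.cons_val_one, Matrix.head_cons,
      Matrix.cons_val_two, Matrix.cons_val_three, Matrix.tail_cons, Matrix.empty_val',
      Matrix.cons_val_fin_one, Matrix.head_fin_const, Matrix.of_apply, one_mul, mul_one,
      zero_mul, mul_zero, add_zero, zero_add, sub_zero, zero_sub] at e28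
  have e29 := H 1 2 3 2
  rw [x1, x2] at e29
  simp only [Matrix.sub_apply, Matrix.add_apply, Matrix.mul_apply, Fin.sum_univ_four,
      Matrix.cons_val', Matrix.cons_val_zero, Matrix.cons_val_one, Matrix.head_cons,
      Matrix.cons_val_two, Matrix.cons_val_three, Matrix.tail_cons, Matrix.empty_val',
      Matrix.cons_val_fin_one, Matrix.head_fin_const, Matrix.of_apply, one_mul, mul_one,
      zero_mul, mul_zero, add_zero, zero_add, sub_zero, zero_sub] at e29
  have e30 := H 1 3 0 0
  rw [x1, x3] at e30
  simp only [Matrix.sub_apply, Matrix.add_apply, Matrix.mul_apply, Fin.sum_univ_four,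
      Matrix.cons_val', Matrix.cons_val_zero, Matrix.cons_val_one, Matrix.head_cons,
      Matrix.cons_val_two, Matrix.cons_val_three, Matrix.tail_cons, Matrix.empty_val',
      Matrix.cons_val_fin_one, Matrix.head_fin_const, Matrix.of_apply, one_mul, mul_one,
      zero_mul, mul_zero, add_zero, zero_add, sub_zero, zero_sub] at e30
  have e31 := H 1 3 0 1
  rw [x1, x3] at e31
  simp only [Matrix.sub_apply, Matrix.add_apply, Matrix.mul_apply, Fin.sum_univ_four,
      Matrix.cons_val', Matrix.cons_val_zero, Matrix.cons_val_one, Matrix.head_cons,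
      Matrix.cons_val_two, Matrix.cons_val_three, Matrix.tail_cons, Matrix.empty_val',
      Matrix.cons_val_fin_one, Matrix.head_fin_const, Matrix.of_apply, one_mul, mul_one,
      zero_mul, mul_zero, add_zero, zero_add, sub_zero, zero_sub] at e31
  have e32 := H 1 3 0 2
  rw [x1, x3] at e32
  simp only [Matrix.sub_apply, Matrix.add_apply, Matrix.mul_apply, Fin.sum_univ_four,
      Matrix.cons_val', Matrix.cons_val_zero, Matrix.cons_val_one, Matrix.head_cons,
      Matrix.cons_val_two, Matrix.cons_val_three, Matrix.tail_cons, Matrix.empty_val',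
      Matrix.cons_val_fin_one, Matrix.head_fin_const, Matrix.of_apply, one_mul, mul_one,
      zero_mul, mul_zero, add_zero, zero_add, sub_zero, zero_sub] at e32
  have e33 := H 1 3 0 3
  rw [x1, x3] at e33
  simp only [Matrix.sub_apply, Matrix.add_apply, Matrix.mul_apply, Fin.sum_univ_four,
      Matrix.cons_val', Matrix.cons_val_zero, Matrix.cons_val_one, Matrix.head_cons,
      Matrix.cons_val_two, Matrix.cons_val_three, Matrix.tail_cons, Matrix.empty_val',
      Matrix.cons_val_fin_one, Matrix.head_fin_const, Matrix.of_apply, one_mul, mul_one,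
      zero_mul, mul_zero, add_zero, zero_add, sub_zero, zero_sub] at e33
  have e34 := H 1 3 1 2
  rw [x1, x3] at e34
  simp only [Matrix.sub_apply, Matrix.add_apply, Matrix.mul_apply, Fin.sum_univ_four,
      Matrix.cons_val', Matrix.cons_val_zero, Matrix.cons_val_one, Matrix.head_cons,
      Matrix.cons_val_two, Matrix.cons_val_three, Matrix.tail_cons, Matrix.empty_val',
      Matrix.cons_val_fin_one, Matrix.head_fin_const, Matrix.of_apply, one_mul, mul_one,
      zero_mul, mul_zero, add_zero, zero_add, sub_zero, zero_sub] at e34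
  have e35 := H 1 3 1 3
  rw [x1, x3] at e35
  simp only [Matrix.sub_apply, Matrix.add_apply, Matrix.mul_apply, Fin.sum_univ_four,
      Matrix.cons_val', Matrix.cons_val_zero, Matrix.cons_val_one, Matrix.head_cons,
      Matrix.cons_val_two, Matrix.cons_val_three, Matrix.tail_cons, Matrix.empty_val',
      Matrix.cons_val_fin_one, Matrix.head_fin_const, Matrix.of_apply, one_mul, mul_one,
      zero_mul, mul_zero, add_zero, zero_add, sub_zero, zero_sub] at e35
  have e36 := H 2 3 0 2
  rw [x2, x3] at e36
  simp only [Matrix.sub_apply, Matrix.add_apply, Matrix.mul_apply, Fin.sum_univ_four,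
      Matrix.cons_val', Matrix.cons_val_zero, Matrix.cons_val_one, Matrix.head_cons,
      Matrix.cons_val_two, Matrix.cons_val_three, Matrix.tail_cons, Matrix.empty_val',
      Matrix.cons_val_fin_one, Matrix.head_fin_const, Matrix.of_apply, one_mul, mul_one,
      zero_mul, mul_zero, add_zero, zero_add, sub_zero, zero_sub] at e36
  have e37 := H 2 3 0 3
  rw [x2, x3] at e37
  simp only [Matrix.sub_apply, Matrix.add_apply, Matrix.mul_apply, Fin.sum_univ_four,
      Matrix.cons_val', Matrix.cons_val_zero, Matrix.cons_val_one, Matrix.head_cons,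
      Matrix.cons_val_two, Matrix.cons_val_three, Matrix.tail_cons, Matrix.empty_val',
      Matrix.cons_val_fin_one, Matrix.head_fin_const, Matrix.of_apply, one_mul, mul_one,
      zero_mul, mul_zero, add_zero, zero_add, sub_zero, zero_sub] at e37
  have e38 := H 2 3 1 2
  rw [x2, x3] at e38
  simp only [Matrix.sub_apply, Matrix.add_apply, Matrix.mul_apply, Fin.sum_univ_four,
      Matrix.cons_val', Matrix.cons_val_zero, Matrix.cons_val_one, Matrix.head_cons,
      Matrix.cons_val_two, Matrix.cons_val_three, Matrix.tail_cons, Matrix.empty_val',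
      Matrix.cons_val_fin_one, Matrix.head_fin_const, Matrix.of_apply, one_mul, mul_one,
      zero_mul, mul_zero, add_zero, zero_add, sub_zero, zero_sub] at e38
  have e39 := H 2 3 1 3
  rw [x2, x3] at e39
  simp only [Matrix.sub_apply, Matrix.add_apply, Matrix.mul_apply, Fin.sum_univ_four,
      Matrix.cons_val', Matrix.cons_val_zero, Matrix.cons_val_one, Matrix.head_cons,
      Matrix.cons_val_two, Matrix.cons_val_three, Matrix.tail_cons, Matrix.empty_val',
      Matrix.cons_val_fin_one, Matrix.head_fin_const, Matrix.of_apply, one_mul, mul_one,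
      zero_mul, mul_zero, add_zero, zero_add, sub_zero, zero_sub] at e39
  refine ⟨![z 0 0 2, z 0 0 3, z 0 1 2, z 0 1 3, z 0 3 3, z 1 0 2, z 1 0 3, z 1 1 2, z 1 1 3, z 1 3 3, z 2 0 2, z 2 0 3, z 2 1 0, z 2 1 2, z 2 1 3, z 2 3 3, z 3 0 2, z 3 0 3, z 3 1 0, z 3 1 2, z 3 1 3, z 3 2 2, z 3 2 3, z 3 3 3], ?_⟩
  funext i
  fin_cases i
  · show !![z 0 3 3 + z 2 1 0, -z 3 2 3, z 0 0 2, z 0 0 3;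
      0, z 0 3 3, z 0 1 2, z 0 1 3;
      0, 0, z 0 3 3 - z 2 1 0, 0;
      0, 0, -z 3 1 0, z 0 3 3] = z 0
    conv_rhs => rw [eta_fin_four (z 0)]
    apply fin4_ext
    · linear_combination -e3 - e28
    · linear_combination -e20
    · rfl
    · rfl
    · linear_combination -e5
    · linear_combination -e22
    · rfl
    · rfl
    · linear_combination -e6
    · linear_combination e13
    · linear_combination e14 - e22
    · linear_combination e15
    · linear_combination -e8
    · linear_combination -e23
    · linear_combination e21
    · rfl
  · show !![z 1 3 3 + 2 * z 3 1 0, z 3 2 2 - z 3 3 3, z 1 0 2, z 1 0 3;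
      0, z 1 3 3 + z 3 1 0, z 1 1 2, z 1 1 3;
      0, 0, z 1 3 3 + z 3 1 0, -z 2 1 0;
      0, 0, 0, z 1 3 3] = z 1
    conv_rhs => rw [eta_fin_four (z 1)]
    apply fin4_ext
    · linear_combination e2 - e21 + e27 - e35
    · linear_combination e19 - e33
    · rfl
    · rfl
    · linear_combination e4
    · linear_combination -e35
    · rfl
    · rfl
    · linear_combination -e0 - e8
    · linear_combination -e1 - e23
    · linear_combination e27 - e35
    · linear_combination e28
    · linear_combination e7
    · linear_combination -e29
    · linear_combination e34
    · rfl
  · show !![z 2 3 3, 0, z 2 0 2, z 2 0 3;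
      z 2 1 0, z 2 3 3 - z 3 2 3, z 2 1 2, z 2 1 3;
      0, 0, z 2 3 3 + z 3 2 3, 0;
      0, 0, -z 3 2 2 + z 3 3 3, z 2 3 3] = z 2
    conv_rhs => rw [eta_fin_four (z 2)]
    apply fin4_ext
    · linear_combination e26
    · linear_combination -e37
    · rfl
    · rfl
    · rfl
    · linear_combination -e39
    · rfl
    · rfl
    · linear_combination -e9
    · linear_combination -e10
    · linear_combination -e11 + e20 + e26
    · linear_combination -e12
    · linear_combination e16 - e23
    · linear_combination -e24
    · linear_combination -e19 - e25 + e33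
    · rfl
  · show !![z 3 2 2, 0, z 3 0 2, z 3 0 3;
      z 3 1 0, 2 * z 3 2 2 - z 3 3 3, z 3 1 2, z 3 1 3;
      0, 0, z 3 2 2, z 3 2 3;
      0, 0, 0, z 3 3 3] = z 3
    conv_rhs => rw [eta_fin_four (z 3)]
    apply fin4_ext
    · linear_combination e19
    · linear_combination e36
    · rfl
    · rfl
    · rfl
    · linear_combination e19 + e25 - e33 + e38
    · rfl
    · rfl
    · linear_combination -e17
    · linear_combination -e18
    · rfl
    · rfl
    · linear_combination -e30
    · linear_combination -e31
    · linear_combination -e32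
    · rfl

end SqZeroAux

/-- the quadruple `(E₁₃, E₁₄, E₂₃, E₂₄)` of `4×4` matrices has all pairwise
products zero (so it pairwise commutes), and the tangent space to the commuting variety
at it has dimension exactly `24`. -/
theorem sqZeroQuadruple_commutes_and_tangent_dim (k : Type*) [Field k] [CharZero k] :
    (∀ i j, sqZeroQuadruple k i * sqZeroQuadruple k j = 0) ∧
      (∀ i j, Commute (sqZeroQuadruple k i) (sqZeroQuadruple k j)) ∧
      Module.finrank k ↥(commTangent k (sqZeroQuadruple k)) = 24 := by
  have hprod : ∀ i j, sqZeroQuadruple k i * sqZeroQuadruple k j = 0 := by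
    intro i j
    fin_cases i <;> fin_cases j <;>
      simp only [sqZeroQuadruple, Matrix.cons_val_zero, Matrix.cons_val_one, Matrix.head_cons,
        Matrix.cons_val_two, Matrix.cons_val_three, Matrix.tail_cons, Fin.mk_one, Fin.isValue] <;>
      exact Matrix.single_mul_single_of_ne _ _ _ _ (by decide) _
  refine ⟨hprod, fun i j => (hprod i j).trans (hprod j i).symm, ?_⟩
  have hr : commTangent k (sqZeroQuadruple k) = LinearMap.range (sqZeroTangentParam k) :=
    le_antisymm (commTangent_le_range k)
      (by rintro z ⟨p, rfl⟩; exact sqZeroTangentParam_mem k p)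
  rw [hr, LinearMap.finrank_range_of_inj (sqZeroTangentParam_inj k), Module.finrank_fin_fun]
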